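/- arXiv:1610.05719 — 2 statements merged into one kernel-verified Lean document; each statement's English description precedes it below -/
import Mathlib

section
/- Let k₁ < k₂ < ⋯ be a strictly increasing sequence of positive integers, let (S_n) be a convergent sequence of nonnegative matrices with γ(S_n) ≤ c, and let (X_i) be a sequence of nonnegative square matrices with γ(X_i) ≤ c such that the Hausdorff distance from C(X_i,k_i) to lim_{n→∞} C(S_n,k_i) is at most 1/i for every i. Then the sequence (X_i) is convergent and lim_{i→∞} C(X_i,k) = lim_{n→∞} C(S_n,k) for every positive integer k. -/
open MeasureTheory Matrix
open scoped Pointwise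

noncomputable section

/-- The Cantor set `{0,1}^ℕ`. -/
abbrev Cantor : Type := ℕ → Bool

/-- Cylinder set of a binary string given as a function `Fin n → Bool`. -/
def cylF {n : ℕ} (x : Fin n → Bool) : Set Cantor := {ω | ∀ i : Fin n, ω i = x i}

/-- Cylinder set of a binary string given as a list. -/
def cyl (x : List Bool) : Set Cantor := {ω | ∀ i : Fin x.length, ω i = x.get i}

/-- `ν` is the fair coin-flipping (uniform product) measure on the Cantor set:
the unique Borel probability measure giving every cylinder of depth `n` mass `2⁻ⁿ`. -/
def IsCoinMeasure (ν : Measure Cantor) : Prop :=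
  IsProbabilityMeasure ν ∧ ∀ (n : ℕ) (x : Fin n → Bool), ν (cylF x) = (1 / 2 : ENNReal) ^ n

/-- `K(k,n)`: nonnegative `k × I` matrices with all row sums `|I|/k` and all column sums `1`. -/
def Kset (k : ℕ) (I : Type) [Fintype I] : Set (Matrix (Fin k) I ℝ) :=
  {M | (∀ i j, 0 ≤ M i j) ∧ (∀ i, ∑ j, M i j = (Fintype.card I : ℝ) / k) ∧
       (∀ j, ∑ i, M i j = 1)}

/-- The `k`-shape `C(S,k) = {M S Mᵀ : M ∈ K(k,n)}` of a square matrix `S`. -/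
def matShape {I : Type} [Fintype I] (S : Matrix I I ℝ) (k : ℕ) :
    Set (Matrix (Fin k) (Fin k) ℝ) :=
  (fun M => M * S * Mᵀ) '' Kset k I

/-- `γ(S)`: the sum of all entries of `S`. -/
def gamma {I : Type} [Fintype I] (S : Matrix I I ℝ) : ℝ := ∑ i, ∑ j, S i j

/-- The entrywise ℓ¹ norm of a matrix. -/
def l1 {k : ℕ} (A : Matrix (Fin k) (Fin k) ℝ) : ℝ := ∑ i, ∑ j, |A i j|

/-- The Hausdorff distance (w.r.t. the entrywise ℓ¹ norm) between `A` and `B` is at most `ε`. -/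
def hdistLE {k : ℕ} (A B : Set (Matrix (Fin k) (Fin k) ℝ)) (ε : ℝ) : Prop :=
  (∀ X ∈ A, ∃ Y ∈ B, l1 (X - Y) ≤ ε) ∧ (∀ Y ∈ B, ∃ X ∈ A, l1 (X - Y) ≤ ε)

/-- Convergence of a sequence of shapes to `L` in the ℓ¹-Hausdorff metric. -/
def ShapeTendsto {k : ℕ} (C : ℕ → Set (Matrix (Fin k) (Fin k) ℝ))
    (L : Set (Matrix (Fin k) (Fin k) ℝ)) : Prop :=
  ∀ ε : ℝ, 0 < ε → ∃ N : ℕ, ∀ n ≥ N, hdistLE (C n) L ε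

/-- `C₀(μ,k)`: matrices `M` with `M i j = ∫ fᵢ(x) fⱼ(y) dμ` for a measurable partition of unity
`f₁,…,f_k` with `∫ fᵢ dν = 1/k`. -/
def mShape0 {α : Type} [MeasurableSpace α] (ν : Measure α) (μ : Measure (α × α)) (k : ℕ) :
    Set (Matrix (Fin k) (Fin k) ℝ) :=
  {M | ∃ f : Fin k → α → ℝ,
    (∀ i, Measurable (f i)) ∧ (∀ i x, 0 ≤ f i x) ∧ (∀ x, ∑ i, f i x = 1) ∧
    (∀ i, ∫ x, f i x ∂ν = 1 / k) ∧
    (∀ i j, M i j = ∫ p, f i p.1 * f j p.2 ∂μ)}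

/-- `C(μ,k)`: the topological closure of `C₀(μ,k)`. -/
def mShape {α : Type} [MeasurableSpace α] (ν : Measure α) (μ : Measure (α × α)) (k : ℕ) :
    Set (Matrix (Fin k) (Fin k) ℝ) := closure (mShape0 ν μ k)

/-- `C_c(μ,k)`: as `C₀(μ,k)` but with continuous witness functions. -/
def mShapeC (ν : Measure Cantor) (μ : Measure (Cantor × Cantor)) (k : ℕ) :
    Set (Matrix (Fin k) (Fin k) ℝ) :=
  {M | ∃ f : Fin k → Cantor → ℝ,
    (∀ i, Continuous (f i)) ∧ (∀ i x, 0 ≤ f i x) ∧ (∀ x, ∑ i, f i x = 1) ∧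
    (∀ i, ∫ x, f i x ∂ν = 1 / k) ∧
    (∀ i j, M i j = ∫ p, f i p.1 * f j p.2 ∂μ)}

open Classical in
/-- The real adjacency matrix of a simple graph. -/
def adjMat {V : Type} [Fintype V] (G : SimpleGraph V) : Matrix V V ℝ :=
  fun a b => if G.Adj a b then 1 else 0

/-- `C₀(G,k) = ‖A_G‖₁⁻¹ ⬝ C(A_G,k)` for a finite graph `G`. -/
def graphShape {V : Type} [Fintype V] (G : SimpleGraph V) (k : ℕ) :
    Set (Matrix (Fin k) (Fin k) ℝ) :=
  (gamma (adjMat G))⁻¹ • matShape (adjMat G) k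

/-- `K̂(k,m)`: characteristic matrices of balanced partitions of `{1,…,m}` into `k` classes. -/
def Khat (k m : ℕ) : Set (Matrix (Fin k) (Fin m) ℝ) :=
  {M | (∀ i j, M i j = 0 ∨ M i j = 1) ∧ (∀ j, ∑ i, M i j = 1) ∧
       (∀ i, ∑ j, M i j = (⌈(m : ℝ) / k⌉₊ : ℝ) ∨ ∑ j, M i j = (⌊(m : ℝ) / k⌋₊ : ℝ))}

/-- `C̃₀(μ,α)`: matrices coming from a measurable partition of unity with `∫ fᵢ dν = αᵢ`. -/
def tShape0 {α : Type} [MeasurableSpace α] (ν : Measure α) (μ : Measure (α × α)) {m : ℕ}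
    (a : Fin m → ℝ) : Set (Matrix (Fin m) (Fin m) ℝ) :=
  {M | ∃ f : Fin m → α → ℝ,
    (∀ i, Measurable (f i)) ∧ (∀ i x, 0 ≤ f i x) ∧ (∀ x, ∑ i, f i x = 1) ∧
    (∀ i, ∫ x, f i x ∂ν = a i) ∧
    (∀ i j, M i j = ∫ p, f i p.1 * f j p.2 ∂μ)}

/-- `C̃(μ,α)`: the topological closure of `C̃₀(μ,α)`. -/
def tShape {α : Type} [MeasurableSpace α] (ν : Measure α) (μ : Measure (α × α)) {m : ℕ}
    (a : Fin m → ℝ) : Set (Matrix (Fin m) (Fin m) ℝ) := closure (tShape0 ν μ a)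

/-- The Hausdorff distance w.r.t. the entrywise ℓ∞ norm between `A` and `B` is at most `ε`. -/
def hdistInfLE {m : ℕ} (A B : Set (Matrix (Fin m) (Fin m) ℝ)) (ε : ℝ) : Prop :=
  (∀ X ∈ A, ∃ Y ∈ B, ∀ i j, |X i j - Y i j| ≤ ε) ∧
  (∀ Y ∈ B, ∃ X ∈ A, ∀ i j, |X i j - Y i j| ≤ ε)

-- basic l1 lemmas
lemma l1_sub_comm {k : ℕ} (A B : Matrix (Fin k) (Fin k) ℝ) : l1 (A - B) = l1 (B - A) := by
  simp [l1, Matrix.sub_apply, abs_sub_comm]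

lemma l1_triangle {k : ℕ} (A B C : Matrix (Fin k) (Fin k) ℝ) :
    l1 (A - C) ≤ l1 (A - B) + l1 (B - C) := by
  unfold l1
  rw [← Finset.sum_add_distrib]
  refine Finset.sum_le_sum fun i _ => ?_
  rw [← Finset.sum_add_distrib]
  refine Finset.sum_le_sum fun j _ => ?_
  simp only [Matrix.sub_apply]
  exact abs_sub_le _ _ _

lemma hdistLE_symm {k : ℕ} {A B : Set (Matrix (Fin k) (Fin k) ℝ)} {ε : ℝ}
    (h : hdistLE A B ε) : hdistLE B A ε := by
  obtain ⟨h1, h2⟩ := h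
  constructor
  · intro Y hY
    obtain ⟨Z, hZ, hd⟩ := h2 Y hY
    exact ⟨Z, hZ, by rwa [l1_sub_comm]⟩
  · intro Y hY
    obtain ⟨Z, hZ, hd⟩ := h1 Y hY
    exact ⟨Z, hZ, by rwa [l1_sub_comm]⟩

lemma hdistLE_trans {k : ℕ} {A B C : Set (Matrix (Fin k) (Fin k) ℝ)} {ε₁ ε₂ : ℝ}
    (h1 : hdistLE A B ε₁) (h2 : hdistLE B C ε₂) : hdistLE A C (ε₁ + ε₂) := by
  constructor
  · intro X hX
    obtain ⟨Y, hY, hd1⟩ := h1.1 X hX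
    obtain ⟨Z, hZ, hd2⟩ := h2.1 Y hY
    exact ⟨Z, hZ, le_trans (l1_triangle X Y Z) (add_le_add hd1 hd2)⟩
  · intro Z hZ
    obtain ⟨Y, hY, hd2⟩ := h2.2 Z hZ
    obtain ⟨X, hX, hd1⟩ := h1.2 Y hY
    exact ⟨X, hX, le_trans (l1_triangle X Y Z) (add_le_add hd1 hd2)⟩

lemma hdistLE_mono {k : ℕ} {A B : Set (Matrix (Fin k) (Fin k) ℝ)} {ε ε' : ℝ}
    (h : hdistLE A B ε) (hε : ε ≤ ε') : hdistLE A B ε' :=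
  ⟨fun X hX => (h.1 X hX).imp fun Y ⟨hY, hd⟩ => ⟨hY, hd.trans hε⟩,
   fun Y hY => (h.2 Y hY).imp fun X ⟨hX, hd⟩ => ⟨hX, hd.trans hε⟩⟩

lemma Kset_comp {j k : ℕ} {I : Type} [Fintype I] (hj : 0 < j) (hk : 0 < k)
    {R : Matrix (Fin j) (Fin k) ℝ} {M : Matrix (Fin k) I ℝ}
    (hR : R ∈ Kset j (Fin k)) (hM : M ∈ Kset k I) : R * M ∈ Kset j I := by
  obtain ⟨hR0, hRr, hRc⟩ := hR
  obtain ⟨hM0, hMr, hMc⟩ := hM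
  have hjR : (j : ℝ) ≠ 0 := Nat.cast_ne_zero.mpr hj.ne'
  have hkR : (k : ℝ) ≠ 0 := Nat.cast_ne_zero.mpr hk.ne'
  refine ⟨fun i a => ?_, ?_, ?_⟩
  · rw [Matrix.mul_apply]
    exact Finset.sum_nonneg fun t _ => mul_nonneg (hR0 i t) (hM0 t a)
  · intro i
    simp only [Matrix.mul_apply]
    rw [Finset.sum_comm]
    have : ∀ t : Fin k, ∑ a, R i t * M t a = R i t * ((Fintype.card I : ℝ) / k) := by
      intro t; rw [← Finset.mul_sum, hMr t]
    rw [Finset.sum_congr rfl fun t _ => this t, ← Finset.sum_mul, hRr i]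
    simp only [Fintype.card_fin]
    field_simp
  · intro a
    simp only [Matrix.mul_apply]
    rw [Finset.sum_comm]
    have : ∀ t : Fin k, ∑ i, R i t * M t a = M t a := by
      intro t; rw [← Finset.sum_mul, hRc t, one_mul]
    rw [Finset.sum_congr rfl fun t _ => this t, hMc a]

lemma l1_conj_le {j k : ℕ} {R : Matrix (Fin j) (Fin k) ℝ} (hR : R ∈ Kset j (Fin k))
    (Δ : Matrix (Fin k) (Fin k) ℝ) : l1 (R * Δ * Rᵀ) ≤ l1 Δ := by
  obtain ⟨hR0, _, hRc⟩ := hR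
  have key : ∀ i i', |(R * Δ * Rᵀ) i i'| ≤ ∑ a, ∑ b, R i a * |Δ a b| * R i' b := by
    intro i i'
    have : (R * Δ * Rᵀ) i i' = ∑ a, ∑ b, R i a * Δ a b * R i' b := by
      simp only [Matrix.mul_apply, Matrix.transpose_apply, Finset.sum_mul]
      rw [Finset.sum_comm]
    rw [this]
    refine le_trans (Finset.abs_sum_le_sum_abs _ _) (Finset.sum_le_sum fun a _ => ?_)
    refine le_trans (Finset.abs_sum_le_sum_abs _ _) (Finset.sum_le_sum fun b _ => ?_)
    simp [abs_mul, abs_of_nonneg (hR0 i a), abs_of_nonneg (hR0 i' b)]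
  calc l1 (R * Δ * Rᵀ) ≤ ∑ i, ∑ i', ∑ a, ∑ b, R i a * |Δ a b| * R i' b := by
        exact Finset.sum_le_sum fun i _ => Finset.sum_le_sum fun i' _ => key i i'
    _ = ∑ i, ∑ a, ∑ b, R i a * |Δ a b| := by
        refine Finset.sum_congr rfl fun i _ => ?_
        rw [Finset.sum_comm]
        refine Finset.sum_congr rfl fun a _ => ?_
        rw [Finset.sum_comm]
        refine Finset.sum_congr rfl fun b _ => ?_
        rw [← Finset.mul_sum, hRc b, mul_one]
    _ = l1 Δ := by
        unfold l1
        rw [Finset.sum_comm]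
        refine Finset.sum_congr rfl fun a _ => ?_
        rw [Finset.sum_comm]
        refine Finset.sum_congr rfl fun b _ => ?_
        rw [← Finset.sum_mul, hRc a, one_mul]

lemma exists_factor {j k : ℕ} (hj : 0 < j) (hjk : j ≤ k) {I : Type} [Fintype I]
    {Q : Matrix (Fin j) I ℝ} (hQ : Q ∈ Kset j I) :
    ∃ R ∈ Kset j (Fin k), ∃ M ∈ Kset k I, ∀ i a,
      (R * M) i a = ((j * (k / j) : ℕ) : ℝ) / k * Q i a + ((k % j : ℕ) : ℝ) / (j * k) := by
  obtain ⟨hQ0, hQr, hQc⟩ := hQ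
  have hk : 0 < k := lt_of_lt_of_le hj hjk
  set q := k / j with hqdef
  set r := k % j with hrdef
  have hkey : j * q + r = k := Nat.div_add_mod k j
  have hjR : (j : ℝ) ≠ 0 := Nat.cast_ne_zero.mpr hj.ne'
  have hkR : (k : ℝ) ≠ 0 := Nat.cast_ne_zero.mpr hk.ne'
  have hkeyR : (j : ℝ) * q + r = k := by exact_mod_cast hkey
  let e : (Fin j × Fin q) ⊕ Fin r ≃ Fin k :=
    ((finProdFinEquiv.sumCongr (Equiv.refl (Fin r))).trans finSumFinEquiv).trans (finCongr hkey)
  let M : Matrix (Fin k) I ℝ := fun t a =>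
    Sum.elim (fun iu : Fin j × Fin q => (j : ℝ) / k * Q iu.1 a) (fun _ : Fin r => 1 / k) (e.symm t)
  let R : Matrix (Fin j) (Fin k) ℝ := fun i t =>
    Sum.elim (fun iu : Fin j × Fin q => if iu.1 = i then (1:ℝ) else 0) (fun _ : Fin r => 1 / j)
      (e.symm t)
  have sumk : ∀ F : Fin k → ℝ,
      ∑ t : Fin k, F t = (∑ i' : Fin j, ∑ u : Fin q, F (e (.inl (i', u)))) +
        ∑ v : Fin r, F (e (.inr v)) := by
    intro F
    rw [← Equiv.sum_comp e F, Fintype.sum_sum_type, Fintype.sum_prod_type]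
  have hRl : ∀ (i i' : Fin j) (u : Fin q), R i (e (.inl (i', u))) = if i' = i then (1:ℝ) else 0 := by
    intro i i' u; simp only [R, Equiv.symm_apply_apply, Sum.elim_inl]
  have hRr2 : ∀ (i : Fin j) (v : Fin r), R i (e (.inr v)) = 1 / j := by
    intro i v; simp only [R, Equiv.symm_apply_apply, Sum.elim_inr]
  have hMl : ∀ (i' : Fin j) (u : Fin q) (a : I), M (e (.inl (i', u))) a = (j : ℝ) / k * Q i' a := by
    intro i' u a; simp only [M, Equiv.symm_apply_apply, Sum.elim_inl]
  have hMr2 : ∀ (v : Fin r) (a : I), M (e (.inr v)) a = 1 / k := by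
    intro v a; simp only [M, Equiv.symm_apply_apply, Sum.elim_inr]
  have hRmem : R ∈ Kset j (Fin k) := by
    refine ⟨fun i t => ?_, fun i => ?_, fun t => ?_⟩
    · rcases h : e.symm t with iu | v <;> simp only [R, h, Sum.elim_inl, Sum.elim_inr]
      · positivity
      · positivity
    · rw [sumk (fun t => R i t)]
      simp only [hRl, hRr2, Finset.sum_const, Finset.card_univ, Fintype.card_fin, nsmul_eq_mul]
      simp only [mul_ite, mul_one, mul_zero, Finset.sum_ite_eq', Finset.mem_univ, if_true]
      field_simp
      linarith [hkeyR]
    · rcases h : e.symm t with iu | v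
      · have ht : t = e (.inl iu) := by rw [← h, Equiv.apply_symm_apply]
        subst ht
        have : ∀ i : Fin j, R i (e (.inl iu)) = if iu.1 = i then (1:ℝ) else 0 := fun i => hRl i iu.1 iu.2
        rw [Finset.sum_congr rfl fun i _ => this i]
        simp [Finset.sum_ite_eq]
      · have ht : t = e (.inr v) := by rw [← h, Equiv.apply_symm_apply]
        subst ht
        rw [Finset.sum_congr rfl fun i _ => hRr2 i v]
        simp only [Finset.sum_const, Finset.card_univ, Fintype.card_fin, nsmul_eq_mul]
        field_simp
  have hMmem : M ∈ Kset k I := by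
    refine ⟨fun t a => ?_, fun t => ?_, fun a => ?_⟩
    · rcases h : e.symm t with iu | v <;> simp only [M, h, Sum.elim_inl, Sum.elim_inr]
      · exact mul_nonneg (by positivity) (hQ0 _ _)
      · positivity
    · rcases h : e.symm t with iu | v
      · have ht : t = e (.inl iu) := by rw [← h, Equiv.apply_symm_apply]
        subst ht
        rw [Finset.sum_congr rfl fun a _ => hMl iu.1 iu.2 a, ← Finset.mul_sum, hQr iu.1]
        field_simp
      · have ht : t = e (.inr v) := by rw [← h, Equiv.apply_symm_apply]
        subst ht
        rw [Finset.sum_congr rfl fun a _ => hMr2 v a]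
        simp only [Finset.sum_const, Finset.card_univ, nsmul_eq_mul]
        field_simp
    · rw [sumk (fun t => M t a)]
      simp only [hMl, hMr2, Finset.sum_const, Finset.card_univ, Fintype.card_fin, nsmul_eq_mul]
      have : ∑ i' : Fin j, (q : ℝ) * ((j : ℝ) / k * Q i' a) = (q : ℝ) * ((j:ℝ) / k) := by
        rw [← Finset.mul_sum]
        have : ∑ i' : Fin j, (j : ℝ) / k * Q i' a = (j:ℝ)/k := by
          rw [← Finset.mul_sum, hQc a, mul_one]
        rw [this]
      rw [this]
      field_simp
      linarith [hkeyR]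
  refine ⟨R, hRmem, M, hMmem, fun i a => ?_⟩
  rw [Matrix.mul_apply, sumk (fun t => R i t * M t a)]
  simp only [hRl, hRr2, hMl, hMr2, ite_mul, one_mul, zero_mul, Finset.sum_const,
    Finset.card_univ, Fintype.card_fin, nsmul_eq_mul]
  simp only [mul_ite, mul_zero, Finset.sum_ite_eq', Finset.mem_univ, if_true]
  push_cast
  field_simp

lemma sum4_swap {A B C D : Type} [Fintype A] [Fintype B] [Fintype C] [Fintype D]
    (f : A → B → C → D → ℝ) :
    ∑ i, ∑ i', ∑ a, ∑ b, f i i' a b = ∑ a, ∑ b, ∑ i, ∑ i', f i i' a b :=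
  calc ∑ i, ∑ i', ∑ a, ∑ b, f i i' a b
      = ∑ i, ∑ a, ∑ i', ∑ b, f i i' a b :=
        Finset.sum_congr rfl fun i _ => Finset.sum_comm
    _ = ∑ a, ∑ i, ∑ i', ∑ b, f i i' a b := Finset.sum_comm
    _ = ∑ a, ∑ i, ∑ b, ∑ i', f i i' a b :=
        Finset.sum_congr rfl fun a _ => Finset.sum_congr rfl fun i _ => Finset.sum_comm
    _ = ∑ a, ∑ b, ∑ i, ∑ i', f i i' a b :=
        Finset.sum_congr rfl fun a _ => Finset.sum_comm

lemma shape_perturb {j : ℕ} {I : Type} [Fintype I] {S : Matrix I I ℝ}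
    (hS : ∀ a b, 0 ≤ S a b) {Q Q' : Matrix (Fin j) I ℝ}
    (hQ : Q ∈ Kset j I) (hQ' : Q' ∈ Kset j I) {η : ℝ}
    (hη : ∀ a, ∑ i, |Q i a - Q' i a| ≤ η) :
    l1 (Q * S * Qᵀ - Q' * S * Q'ᵀ) ≤ 2 * η * gamma S := by
  obtain ⟨hQ0, _, hQc⟩ := hQ
  obtain ⟨hQ'0, _, hQ'c⟩ := hQ'
  have expand : ∀ (P : Matrix (Fin j) I ℝ) (i i' : Fin j),
      (P * S * Pᵀ) i i' = ∑ a, ∑ b, P i a * S a b * P i' b := by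
    intro P i i'
    simp only [Matrix.mul_apply, Matrix.transpose_apply, Finset.sum_mul]
    rw [Finset.sum_comm]
  have key : ∀ i i', |(Q * S * Qᵀ - Q' * S * Q'ᵀ) i i'| ≤
      ∑ a, ∑ b, S a b * (|Q i a - Q' i a| * Q i' b + Q' i a * |Q i' b - Q' i' b|) := by
    intro i i'
    rw [Matrix.sub_apply, expand Q, expand Q', ← Finset.sum_sub_distrib]
    refine le_trans (Finset.abs_sum_le_sum_abs _ _) (Finset.sum_le_sum fun a _ => ?_)
    rw [← Finset.sum_sub_distrib]
    refine le_trans (Finset.abs_sum_le_sum_abs _ _) (Finset.sum_le_sum fun b _ => ?_)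
    have h1 : Q i a * S a b * Q i' b - Q' i a * S a b * Q' i' b
        = S a b * ((Q i a - Q' i a) * Q i' b + Q' i a * (Q i' b - Q' i' b)) := by ring
    rw [h1, abs_mul, abs_of_nonneg (hS a b)]
    refine mul_le_mul_of_nonneg_left ?_ (hS a b)
    refine le_trans (abs_add_le _ _) (add_le_add ?_ ?_)
    · rw [abs_mul, abs_of_nonneg (hQ0 i' b)]
    · rw [abs_mul, abs_of_nonneg (hQ'0 i a)]
  calc l1 (Q * S * Qᵀ - Q' * S * Q'ᵀ)
      ≤ ∑ i, ∑ i', ∑ a, ∑ b, S a b *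
          (|Q i a - Q' i a| * Q i' b + Q' i a * |Q i' b - Q' i' b|) :=
        Finset.sum_le_sum fun i _ => Finset.sum_le_sum fun i' _ => key i i'
    _ = ∑ a, ∑ b, S a b * ((∑ i, |Q i a - Q' i a|) * (∑ i', Q i' b)
          + (∑ i, Q' i a) * (∑ i', |Q i' b - Q' i' b|)) := by
        rw [sum4_swap]
        refine Finset.sum_congr rfl fun a _ => Finset.sum_congr rfl fun b _ => ?_
        rw [Finset.sum_mul_sum, Finset.sum_mul_sum, ← Finset.sum_add_distrib, Finset.mul_sum]
        refine Finset.sum_congr rfl fun i _ => ?_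
        rw [← Finset.sum_add_distrib, Finset.mul_sum]
    _ ≤ ∑ a, ∑ b, S a b * (2 * η) := by
        refine Finset.sum_le_sum fun a _ => Finset.sum_le_sum fun b _ => ?_
        refine mul_le_mul_of_nonneg_left ?_ (hS a b)
        rw [hQc b, hQ'c a, mul_one, one_mul]
        linarith [hη a, hη b]
    _ = 2 * η * gamma S := by
        simp only [gamma, Finset.mul_sum, Finset.sum_mul]
        exact Finset.sum_congr rfl fun a _ => Finset.sum_congr rfl fun b _ => by ring

lemma transfer_one {j k : ℕ} (hj : 0 < j) (hjk : j ≤ k) {I I' : Type} [Fintype I] [Fintype I']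
    {A : Matrix I I ℝ} {B : Matrix I' I' ℝ} (hA : ∀ a b, 0 ≤ A a b)
    {c δ : ℝ} (hc : 0 ≤ c) (hγA : gamma A ≤ c)
    (h : ∀ X ∈ matShape A k, ∃ Y ∈ matShape B k, l1 (X - Y) ≤ δ) :
    ∀ X ∈ matShape A j, ∃ Y ∈ matShape B j, l1 (X - Y) ≤ δ + 4 * c * j / k := by
  rintro X ⟨Q, hQ, rfl⟩
  obtain ⟨R, hR, M, hM, hRM⟩ := exists_factor (k := k) hj hjk hQ
  have hk : 0 < k := lt_of_lt_of_le hj hjk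
  have hkR : (0:ℝ) < k := by exact_mod_cast hk
  have hjR : (0:ℝ) < j := by exact_mod_cast hj
  obtain ⟨N', hN'mem, hN'close⟩ := h (M * A * Mᵀ) ⟨M, hM, rfl⟩
  obtain ⟨M', hM', rfl⟩ := hN'mem
  refine ⟨(R * M') * B * (R * M')ᵀ, ⟨R * M', Kset_comp hj hk hR hM', rfl⟩, ?_⟩
  have hQ'mem : R * M ∈ Kset j I := Kset_comp hj hk hR hM
  have tri := l1_triangle (Q * A * Qᵀ) ((R * M) * A * (R * M)ᵀ) ((R * M') * B * (R * M')ᵀ)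
  have e1 : (R * M) * A * (R * M)ᵀ = R * (M * A * Mᵀ) * Rᵀ := by
    simp only [Matrix.transpose_mul, Matrix.mul_assoc]
  have e2 : (R * M') * B * (R * M')ᵀ = R * (M' * B * M'ᵀ) * Rᵀ := by
    simp only [Matrix.transpose_mul, Matrix.mul_assoc]
  have hpiece2 : l1 ((R * M) * A * (R * M)ᵀ - (R * M') * B * (R * M')ᵀ) ≤ δ := by
    rw [e1, e2, ← Matrix.sub_mul, ← Matrix.mul_sub]
    exact le_trans (l1_conj_le hR _) hN'close
  -- set up constants
  set α := ((j * (k / j) : ℕ) : ℝ) / k with hαdef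
  set β := ((k % j : ℕ) : ℝ) / (j * k) with hβdef
  have hq : (j * (k / j)) + (k % j) = k := Nat.div_add_mod k j
  have hcast : (j : ℝ) * ((k / j : ℕ) : ℝ) + ((k % j : ℕ) : ℝ) = k := by exact_mod_cast hq
  have hβ0 : (0:ℝ) ≤ β := by positivity
  have hα1 : α ≤ 1 := by
    rw [hαdef, div_le_one hkR]
    push_cast
    have : (0:ℝ) ≤ ((k % j : ℕ) : ℝ) := by positivity
    linarith
  have h1α : 1 - α = ((k % j : ℕ) : ℝ) / k := by
    rw [hαdef]
    push_cast
    field_simp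
    linarith
  obtain ⟨hQ0, hQrow, hQcol⟩ := hQ
  have hη : ∀ a, ∑ i, |Q i a - (R * M) i a| ≤ (1 - α) + j * β := by
    intro a
    have hb : ∀ i, |Q i a - (R * M) i a| ≤ (1 - α) * Q i a + β := by
      intro i
      rw [hRM i a]
      have he : Q i a - (α * Q i a + β) = (1 - α) * Q i a - β := by ring
      rw [he]
      refine le_trans (abs_sub _ _) ?_
      rw [abs_of_nonneg (mul_nonneg (by linarith) (hQ0 i a)), abs_of_nonneg hβ0]
    calc ∑ i, |Q i a - (R * M) i a| ≤ ∑ i, ((1 - α) * Q i a + β) :=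
          Finset.sum_le_sum fun i _ => hb i
      _ = (1 - α) * (∑ i, Q i a) + j * β := by
          rw [Finset.sum_add_distrib, ← Finset.mul_sum]
          simp [Finset.sum_const, Finset.card_univ, nsmul_eq_mul]
      _ = (1 - α) + j * β := by rw [hQcol a, mul_one]
  have hper := shape_perturb hA ⟨hQ0, hQrow, hQcol⟩ hQ'mem hη
  have hrj : ((k % j : ℕ) : ℝ) ≤ (j : ℝ) := by exact_mod_cast (Nat.mod_lt k hj).le
  have hηval : (1 - α) + (j:ℝ) * β = 2 * ((k % j : ℕ) : ℝ) / k := by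
    rw [h1α, hβdef]
    field_simp
    ring
  have hbound : 2 * ((1 - α) + (j:ℝ) * β) * gamma A ≤ 4 * c * j / k := by
    have h1 : 2 * ((1 - α) + (j:ℝ) * β) * gamma A ≤ 2 * ((1 - α) + (j:ℝ) * β) * c := by
      refine mul_le_mul_of_nonneg_left hγA ?_
      rw [hηval]; positivity
    refine le_trans h1 ?_
    rw [hηval]
    have e3 : 2 * (2 * ((k % j : ℕ) : ℝ) / k) * c = (4 * ((k % j : ℕ) : ℝ) * c) / k := by ring
    rw [e3, div_le_div_iff₀ hkR hkR]
    nlinarith [mul_le_mul_of_nonneg_right (mul_le_mul_of_nonneg_left hrj hc) hkR.le]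
  calc l1 (Q * A * Qᵀ - (R * M') * B * (R * M')ᵀ)
      ≤ l1 (Q * A * Qᵀ - (R * M) * A * (R * M)ᵀ)
        + l1 ((R * M) * A * (R * M)ᵀ - (R * M') * B * (R * M')ᵀ) := tri
    _ ≤ (4 * c * j / k) + δ := add_le_add (le_trans hper hbound) hpiece2
    _ = δ + 4 * c * j / k := by ring

lemma transfer {j k : ℕ} (hj : 0 < j) (hjk : j ≤ k) {I I' : Type} [Fintype I] [Fintype I']
    {A : Matrix I I ℝ} {B : Matrix I' I' ℝ} (hA : ∀ a b, 0 ≤ A a b) (hB : ∀ a b, 0 ≤ B a b)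
    {c δ : ℝ} (hc : 0 ≤ c) (hγA : gamma A ≤ c) (hγB : gamma B ≤ c)
    (h : hdistLE (matShape A k) (matShape B k) δ) :
    hdistLE (matShape A j) (matShape B j) (δ + 4 * c * j / k) := by
  constructor
  · exact transfer_one hj hjk hA hc hγA h.1
  · intro Y hY
    obtain ⟨Z, hZ, hd⟩ := transfer_one hj hjk hB hc hγB (hdistLE_symm h).1 Y hY
    exact ⟨Z, hZ, by rwa [l1_sub_comm]⟩

/-- If `(Sₙ)` is convergent with limit shapes `L k`, `k₁ < k₂ < ⋯`, and the
`(Xᵢ)` satisfy `dist(C(Xᵢ,kᵢ), L kᵢ) ≤ 1/i`, then `(Xᵢ)` is convergent with the same limit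
shapes. -/
theorem stmt_16 (c : ℝ) (hc : 0 < c) (k : ℕ → ℕ) (hmono : StrictMono k)
    (hkpos : ∀ i, 1 ≤ i → 0 < k i)
    (m : ℕ → ℕ) (S : ∀ i, Matrix (Fin (m i)) (Fin (m i)) ℝ)
    (hSnn : ∀ i a b, 0 ≤ S i a b) (hSγ : ∀ i, gamma (S i) ≤ c)
    (L : (j : ℕ) → Set (Matrix (Fin j) (Fin j) ℝ))
    (hL : ∀ j : ℕ, 0 < j → IsCompact (L j) ∧ ShapeTendsto (fun i => matShape (S i) j) (L j))
    (p : ℕ → ℕ) (X : ∀ i, Matrix (Fin (p i)) (Fin (p i)) ℝ)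
    (hXnn : ∀ i a b, 0 ≤ X i a b) (hXγ : ∀ i, gamma (X i) ≤ c)
    (hclose : ∀ i : ℕ, 1 ≤ i → hdistLE (matShape (X i) (k i)) (L (k i)) (1 / (i : ℝ))) :
    ∀ j : ℕ, 0 < j → ShapeTendsto (fun i => matShape (X i) j) (L j) := by
  intro j hj ε hε
  obtain ⟨-, hLtend⟩ := hL j hj
  obtain ⟨N₁, hN₁⟩ := hLtend (ε/4) (by positivity)
  refine ⟨max (max 1 j) (max (⌈(4:ℝ)/ε⌉₊) (⌈16*c*j/ε⌉₊)), fun i hi => ?_⟩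
  have hi1 : 1 ≤ i := le_trans (le_trans (le_max_left 1 j) (le_max_left _ _)) hi
  have hij : j ≤ i := le_trans (le_trans (le_max_right 1 j) (le_max_left _ _)) hi
  have hik : i ≤ k i := hmono.le_apply
  have hki : 0 < k i := hkpos i hi1
  have hjk : j ≤ k i := le_trans hij hik
  have hiR : (0:ℝ) < i := by exact_mod_cast hi1
  have hkiR : (0:ℝ) < k i := by exact_mod_cast hki
  have hiC4 : ((4:ℝ)/ε) ≤ i := by
    have h' : ⌈(4:ℝ)/ε⌉₊ ≤ i := le_trans (le_trans (le_max_left _ _) (le_max_right _ _)) hi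
    exact le_trans (Nat.le_ceil _) (by exact_mod_cast h')
  have hiC16 : ((16*c*j:ℝ)/ε) ≤ k i := by
    have h' : ⌈16*c*(j:ℝ)/ε⌉₊ ≤ i := le_trans (le_trans (le_max_right _ _) (le_max_right _ _)) hi
    have h'' : (i:ℝ) ≤ k i := by exact_mod_cast hik
    calc (16*c*(j:ℝ)/ε) ≤ (⌈16*c*(j:ℝ)/ε⌉₊ : ℝ) := Nat.le_ceil _
      _ ≤ (i : ℝ) := by exact_mod_cast h'
      _ ≤ k i := h''
  obtain ⟨-, hLk⟩ := hL (k i) hki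
  obtain ⟨N₂, hN₂⟩ := hLk (ε/4) (by positivity)
  have h1 : hdistLE (matShape (S (max N₁ N₂)) (k i)) (L (k i)) (ε/4) :=
    hN₂ (max N₁ N₂) (le_max_right _ _)
  have h2 : hdistLE (matShape (S (max N₁ N₂)) j) (L j) (ε/4) := hN₁ (max N₁ N₂) (le_max_left _ _)
  have h3 := hclose i hi1
  have h4 : hdistLE (matShape (X i) (k i)) (matShape (S (max N₁ N₂)) (k i)) (1/(i:ℝ) + ε/4) :=
    hdistLE_trans h3 (hdistLE_symm h1)
  have h5 := transfer hj hjk (hXnn i) (hSnn (max N₁ N₂)) hc.le (hXγ i) (hSγ (max N₁ N₂)) h4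
  have h6 := hdistLE_trans h5 h2
  refine hdistLE_mono h6 ?_
  have b1 : 1/(i:ℝ) ≤ ε/4 := by
    have h4i : (4:ℝ) ≤ i * ε := by
      have := (div_le_iff₀ hε).mp hiC4
      linarith
    rw [div_le_div_iff₀ hiR (by norm_num : (0:ℝ) < 4)]
    linarith
  have b2 : 4*c*(j:ℝ)/(k i) ≤ ε/4 := by
    have h16 : (16*c*(j:ℝ)) ≤ (k i) * ε := by
      have := (div_le_iff₀ hε).mp hiC16
      linarith
    rw [div_le_div_iff₀ hkiR (by norm_num : (0:ℝ) < 4)]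
    linarith
  linarith
end
end

section
/- Let U ⊆ 𝒨⁺_c be a family of measures on 𝒞 × 𝒞 that is uniformly bounded by c in total mass. Fix a positive integer m and ε ∈ (0, 1/m]. Then the maps α ↦ C̃(μ,α), defined on {α ∈ (ε,1]^m : ∑_{i=1}^m α_i = 1} and taking values in the compact subsets of ℝ^{m×m}, are Lipschitz continuous with constant 2c(m−1)/ε uniformly over all μ ∈ 𝒨⁺_c; more precisely, for every η ∈ (0, ε/m), all α, β in the domain with ‖α − β‖_∞ ≤ η, and every μ with total mass at most c, the Hausdorff distance (with respect to the entrywise ℓ∞ norm on ℝ^{m×m}) between C̃(μ,α) and C̃(μ,β) is at most 2c(m−1)η/ε. -/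
open MeasureTheory Matrix
open scoped Pointwise

noncomputable section

section Aux
variable {m : ℕ}

noncomputable def dPlus (a b : Fin m → ℝ) (i : Fin m) : ℝ := max (b i - a i) 0
noncomputable def dMinus (a b : Fin m → ℝ) (i : Fin m) : ℝ := max (a i - b i) 0
noncomputable def Dtot (a b : Fin m → ℝ) : ℝ := ∑ i, dPlus a b i
noncomputable def eMat (a b : Fin m → ℝ) (i k : Fin m) : ℝ :=
  dPlus a b i * dMinus a b k / Dtot a b
noncomputable def TMat (a b : Fin m → ℝ) (i k : Fin m) : ℝ :=
  (if i = k then 1 - dMinus a b k / a k else 0) + eMat a b i k / a k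

variable (a b : Fin m → ℝ)

lemma dPlus_nonneg (i : Fin m) : 0 ≤ dPlus a b i := le_max_right _ _
lemma dMinus_nonneg (i : Fin m) : 0 ≤ dMinus a b i := le_max_right _ _

lemma dPlus_sub_dMinus (i : Fin m) : dPlus a b i - dMinus a b i = b i - a i := by
  rcases le_total (b i) (a i) with h | h <;>
    simp [dPlus, dMinus, max_eq_left, max_eq_right, sub_nonneg.2 h, sub_nonpos.2 h] <;> linarith

lemma Dtot_nonneg : 0 ≤ Dtot a b := Finset.sum_nonneg fun i _ => dPlus_nonneg a b i

lemma dPlus_le_Dtot (i : Fin m) : dPlus a b i ≤ Dtot a b :=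
  Finset.single_le_sum (fun j _ => dPlus_nonneg a b j) (Finset.mem_univ i)

lemma sum_dMinus (h : ∑ i, a i = ∑ i, b i) : ∑ i, dMinus a b i = Dtot a b := by
  have h2 : ∑ i, (dPlus a b i - dMinus a b i) = 0 := by
    simp only [dPlus_sub_dMinus, Finset.sum_sub_distrib, h, sub_self]
  rw [Finset.sum_sub_distrib] at h2
  unfold Dtot
  linarith

lemma dMinus_le_Dtot (h : ∑ i, a i = ∑ i, b i) (i : Fin m) : dMinus a b i ≤ Dtot a b := by
  rw [← sum_dMinus a b h]
  exact Finset.single_le_sum (fun j _ => dMinus_nonneg a b j) (Finset.mem_univ i)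

lemma dMinus_le_abs (i : Fin m) : dMinus a b i ≤ |a i - b i| :=
  max_le (le_abs_self _) (abs_nonneg _)

lemma dPlus_le_abs (i : Fin m) : dPlus a b i ≤ |a i - b i| := by
  refine max_le ?_ (abs_nonneg _)
  rw [abs_sub_comm]; exact le_abs_self _

lemma eMat_nonneg (i k : Fin m) : 0 ≤ eMat a b i k :=
  div_nonneg (mul_nonneg (dPlus_nonneg a b i) (dMinus_nonneg a b k)) (Dtot_nonneg a b)

lemma eMat_le_dMinus (i k : Fin m) : eMat a b i k ≤ dMinus a b k := by
  by_cases hD : Dtot a b = 0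
  · simp only [eMat, hD, div_zero]; exact dMinus_nonneg a b k
  · have hD' : 0 < Dtot a b := lt_of_le_of_ne (Dtot_nonneg a b) (Ne.symm hD)
    rw [eMat, div_le_iff₀ hD']
    nlinarith [dPlus_le_Dtot a b i, dMinus_nonneg a b k, dPlus_nonneg a b i]

lemma eMat_diag (i : Fin m) : eMat a b i i = 0 := by
  have : dPlus a b i * dMinus a b i = 0 := by
    rcases le_total (b i) (a i) with h | h
    · have : dPlus a b i = 0 := max_eq_right (by linarith)
      rw [this, zero_mul]
    · have : dMinus a b i = 0 := max_eq_right (by linarith)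
      rw [this, mul_zero]
  rw [eMat, this, zero_div]

lemma sum_eMat_col (h : ∑ i, a i = ∑ i, b i) (k : Fin m) :
    ∑ i, eMat a b i k = dMinus a b k := by
  by_cases hD : Dtot a b = 0
  · have h1 : dMinus a b k = 0 := le_antisymm (hD ▸ dMinus_le_Dtot a b h k) (dMinus_nonneg a b k)
    simp [eMat, hD, h1]
  · unfold eMat
    rw [← Finset.sum_div, ← Finset.sum_mul]
    rw [show ∑ i, dPlus a b i = Dtot a b from rfl, mul_comm, mul_div_assoc,
      div_self hD, mul_one]

lemma sum_eMat_row (h : ∑ i, a i = ∑ i, b i) (i : Fin m) :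
    ∑ k, eMat a b i k = dPlus a b i := by
  by_cases hD : Dtot a b = 0
  · have h1 : dPlus a b i = 0 := le_antisymm (hD ▸ dPlus_le_Dtot a b i) (dPlus_nonneg a b i)
    simp [eMat, hD, h1]
  · unfold eMat
    rw [← Finset.sum_div, ← Finset.mul_sum, sum_dMinus a b h, mul_div_assoc,
      div_self hD, mul_one]

end Aux

section TM
variable {m : ℕ} {ε η : ℝ} (a b : Fin m → ℝ)
variable (hε : 0 < ε) (haε : ∀ i, ε < a i) (hab : ∀ i, |a i - b i| ≤ η) (hηε : η < ε)

include haε hε in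
lemma a_pos (i : Fin m) : 0 < a i := lt_trans hε (haε i)

include hab in
lemma dMinus_le_eta (k : Fin m) : dMinus a b k ≤ η := (dMinus_le_abs a b k).trans (hab k)

include hε haε hab in
lemma dMinus_div_le (k : Fin m) : dMinus a b k / a k ≤ η / ε :=
  div_le_div₀ (le_trans (dMinus_nonneg a b k) (dMinus_le_eta a b hab k))
    (dMinus_le_eta a b hab k) hε (le_of_lt (haε k))

include hε haε hab hηε in
lemma TMat_nonneg (i k : Fin m) : 0 ≤ TMat a b i k := by
  have hak := a_pos a hε haε k
  have he : 0 ≤ eMat a b i k / a k := div_nonneg (eMat_nonneg a b i k) hak.le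
  unfold TMat
  rcases eq_or_ne i k with rfl | h
  · rw [if_pos rfl]
    have : dMinus a b i / a i ≤ η / ε := dMinus_div_le a b hε haε hab i
    have hle1 : η / ε < 1 := (div_lt_one hε).2 hηε
    linarith
  · simp only [if_neg h, zero_add]; exact he

include hε haε hab hηε in
lemma TMat_offdiag_le {i k : Fin m} (h : i ≠ k) : TMat a b i k ≤ η / ε := by
  unfold TMat
  rw [if_neg h, zero_add]
  refine le_trans ?_ (dMinus_div_le a b hε haε hab k)
  gcongr
  · exact (a_pos a hε haε k).le
  · exact eMat_le_dMinus a b i k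

lemma TMat_diag_eq (i : Fin m) : TMat a b i i = 1 - dMinus a b i / a i := by
  unfold TMat
  rw [if_pos rfl, eMat_diag, zero_div, add_zero]

include hε haε in
lemma TMat_diag_le_one (i : Fin m) : TMat a b i i ≤ 1 := by
  rw [TMat_diag_eq]
  have : 0 ≤ dMinus a b i / a i := div_nonneg (dMinus_nonneg a b i) (a_pos a hε haε i).le
  linarith

include hε haε hab in
lemma TMat_diag_ge (i : Fin m) : 1 - η / ε ≤ TMat a b i i := by
  rw [TMat_diag_eq]
  have := dMinus_div_le a b hε haε hab i
  linarith

include hε haε hab hηε in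
lemma TMat_le_one (i k : Fin m) : TMat a b i k ≤ 1 := by
  rcases eq_or_ne i k with rfl | h
  · exact TMat_diag_le_one a b hε haε i
  · refine le_trans (TMat_offdiag_le a b hε haε hab hηε h) ?_
    rw [div_le_one hε]
    exact hηε.le

include hε haε in
lemma TMat_colsum (hsum : ∑ i, a i = ∑ i, b i) (k : Fin m) : ∑ i, TMat a b i k = 1 := by
  unfold TMat
  rw [Finset.sum_add_distrib, ← Finset.sum_div, sum_eMat_col a b hsum,
    Finset.sum_ite_eq' Finset.univ k (fun _ => 1 - dMinus a b k / a k)]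
  simp only [Finset.mem_univ, if_pos]
  ring

include hε haε in
lemma TMat_mulvec (hsum : ∑ i, a i = ∑ i, b i) (i : Fin m) :
    ∑ k, TMat a b i k * a k = b i := by
  have hk : ∀ k, TMat a b i k * a k
      = (if i = k then a k - dMinus a b k else 0) + eMat a b i k := by
    intro k
    have hak : a k ≠ 0 := (a_pos a hε haε k).ne'
    unfold TMat
    rw [add_mul, div_mul_cancel₀ _ hak]
    congr 1
    rcases eq_or_ne i k with rfl | h
    · rw [if_pos rfl, if_pos rfl, sub_mul, one_mul, div_mul_cancel₀ _ hak]
    · rw [if_neg h, if_neg h, zero_mul]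
  simp only [hk]
  rw [Finset.sum_add_distrib, sum_eMat_row a b hsum,
    Finset.sum_ite_eq Finset.univ i (fun k => a k - dMinus a b k)]
  simp only [Finset.mem_univ, if_pos]
  have := dPlus_sub_dMinus a b i
  linarith

end TM

lemma key {α : Type} [MeasurableSpace α] (c : ℝ) (hc : 0 ≤ c) {m : ℕ} {ε η : ℝ}
    (hε : 0 < ε) (hη : 0 ≤ η) (hηε : η < ε)
    (ν : Measure α) [IsProbabilityMeasure ν]
    (μ : Measure (α × α)) [IsFiniteMeasure μ]
    (hmass : μ Set.univ ≤ ENNReal.ofReal c)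
    (a b : Fin m → ℝ) (haε : ∀ i, ε < a i) (ha1 : ∑ i, a i = 1) (hb1 : ∑ i, b i = 1)
    (hab : ∀ i, |a i - b i| ≤ η) :
    ∀ X ∈ tShape0 ν μ a, ∃ Y ∈ tShape0 ν μ b, ∀ i j, |X i j - Y i j| ≤ 2 * c * η / ε := by
  rintro X ⟨f, hfm, hf0, hfs, hfi, hfX⟩
  have hsum : ∑ i, a i = ∑ i, b i := ha1.trans hb1.symm
  set T : Fin m → Fin m → ℝ := TMat a b with hT
  have hT0 : ∀ i k, 0 ≤ T i k := TMat_nonneg a b hε haε hab hηε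
  have hT1 : ∀ i k, T i k ≤ 1 := TMat_le_one a b hε haε hab hηε
  have hToff : ∀ {i k : Fin m}, i ≠ k → T i k ≤ η / ε := fun h => TMat_offdiag_le a b hε haε hab hηε h
  have hTdg : ∀ i, 1 - η / ε ≤ T i i := TMat_diag_ge a b hε haε hab
  have hTcol : ∀ k, ∑ i, T i k = 1 := TMat_colsum a b (haε := haε) (hε := hε) hsum
  have hTvec : ∀ i, ∑ k, T i k * a k = b i := TMat_mulvec a b hε haε hsum
  have hfle1 : ∀ k x, f k x ≤ 1 := by
    intro k x
    rw [← hfs x]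
    exact Finset.single_le_sum (fun i _ => hf0 i x) (Finset.mem_univ k)
  have hfint : ∀ k, Integrable (f k) ν := by
    intro k
    refine (integrable_const (1:ℝ)).mono' (hfm k).aestronglyMeasurable (ae_of_all _ fun x => ?_)
    rw [Real.norm_eq_abs, abs_of_nonneg (hf0 k x)]
    exact hfle1 k x
  have hFint : ∀ k l, Integrable (fun p : α × α => f k p.1 * f l p.2) μ := by
    intro k l
    have hm : Measurable fun p : α × α => f k p.1 * f l p.2 :=
      ((hfm k).comp measurable_fst).mul ((hfm l).comp measurable_snd)
    refine (integrable_const (1:ℝ)).mono' hm.aestronglyMeasurable (ae_of_all _ fun p => ?_)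
    rw [Real.norm_eq_abs, abs_of_nonneg (mul_nonneg (hf0 k p.1) (hf0 l p.2))]
    nlinarith [hf0 k p.1, hf0 l p.2, hfle1 k p.1, hfle1 l p.2]
  have hX0 : ∀ k l, 0 ≤ X k l := by
    intro k l
    rw [hfX]
    exact integral_nonneg fun p => mul_nonneg (hf0 k p.1) (hf0 l p.2)
  have hXsum : ∑ k, ∑ l, X k l = (μ Set.univ).toReal := by
    calc ∑ k, ∑ l, X k l = ∑ k, ∑ l, ∫ p, f k p.1 * f l p.2 ∂μ := by
          exact Finset.sum_congr rfl fun k _ => Finset.sum_congr rfl fun l _ => hfX k l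
      _ = ∑ k, ∫ p, ∑ l, f k p.1 * f l p.2 ∂μ :=
          Finset.sum_congr rfl fun k _ => (integral_finset_sum _ fun l _ => hFint k l).symm
      _ = ∫ p, ∑ k, ∑ l, f k p.1 * f l p.2 ∂μ :=
          (integral_finset_sum _ fun k _ => integrable_finset_sum _ fun l _ => hFint k l).symm
      _ = ∫ _, (1:ℝ) ∂μ := by
          refine integral_congr_ae (ae_of_all _ fun p => ?_)
          calc ∑ k, ∑ l, f k p.1 * f l p.2
              = ∑ k, f k p.1 * ∑ l, f l p.2 :=
                Finset.sum_congr rfl fun k _ => (Finset.mul_sum _ _ _).symm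
            _ = 1 := by rw [hfs p.2]; simp only [mul_one]; exact hfs p.1
      _ = (μ Set.univ).toReal := by simp; rfl
  have hS : (μ Set.univ).toReal ≤ c := ENNReal.toReal_le_of_le_ofReal hc hmass
  have hXle : ∀ k l, X k l ≤ c := by
    intro k l
    refine le_trans ?_ (hXsum ▸ hS)
    calc X k l ≤ ∑ l', X k l' :=
          Finset.single_le_sum (fun l' _ => hX0 k l') (Finset.mem_univ l)
      _ ≤ ∑ k', ∑ l', X k' l' :=
          Finset.single_le_sum (fun k' _ => Finset.sum_nonneg fun l' _ => hX0 k' l')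
            (Finset.mem_univ k)
  set g : Fin m → α → ℝ := fun i x => ∑ k, T i k * f k x with hg
  set Y : Matrix (Fin m) (Fin m) ℝ := Matrix.of fun i j => ∑ k, ∑ l, T i k * T j l * X k l
    with hY
  have hYe : ∀ i j, Y i j = ∑ k, ∑ l, T i k * T j l * X k l := fun i j => rfl
  refine ⟨Y, ⟨g, ?_, ?_, ?_, ?_, ?_⟩, ?_⟩
  · exact fun i => Finset.measurable_sum _ fun k _ => (hfm k).const_mul _
  · exact fun i x => Finset.sum_nonneg fun k _ => mul_nonneg (hT0 i k) (hf0 k x)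
  · intro x
    rw [Finset.sum_comm]
    calc ∑ k, ∑ i, T i k * f k x = ∑ k, (∑ i, T i k) * f k x := by
          exact Finset.sum_congr rfl fun k _ => (Finset.sum_mul _ _ _).symm
      _ = 1 := by simp only [hTcol, one_mul]; exact hfs x
  · intro i
    rw [integral_finset_sum _ fun k _ => (hfint k).const_mul _]
    simp only [integral_const_mul, hfi]
    exact hTvec i
  · intro i j
    have hexp : ∀ p : α × α, g i p.1 * g j p.2
        = ∑ k, ∑ l, T i k * T j l * (f k p.1 * f l p.2) := by
      intro p
      rw [hg]
      rw [Finset.sum_mul_sum]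
      exact Finset.sum_congr rfl fun k _ => Finset.sum_congr rfl fun l _ => by ring
    calc Y i j = ∑ k, ∑ l, T i k * T j l * X k l := hYe i j
      _ = ∑ k, ∑ l, ∫ p, T i k * T j l * (f k p.1 * f l p.2) ∂μ := by
          refine Finset.sum_congr rfl fun k _ => Finset.sum_congr rfl fun l _ => ?_
          rw [integral_const_mul, hfX]
      _ = ∫ p, ∑ k, ∑ l, T i k * T j l * (f k p.1 * f l p.2) ∂μ := by
          rw [integral_finset_sum _ fun k _ => integrable_finset_sum _
            fun l _ => (hFint k l).const_mul _]
          exact Finset.sum_congr rfl fun k _ =>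
            (integral_finset_sum _ fun l _ => (hFint k l).const_mul _).symm
      _ = ∫ p, g i p.1 * g j p.2 ∂μ := by
          exact integral_congr_ae (ae_of_all _ fun p => (hexp p).symm)
  · intro i j
    have hr0 : 0 ≤ η / ε := div_nonneg hη hε.le
    have hr1 : η / ε ≤ 1 := by rw [div_le_one hε]; exact hηε.le
    set r : ℝ := η / ε with hrdef
    have hcr : 2 * c * η / ε = 2 * (c * r) := by rw [hrdef]; ring
    have hYsum : Y i j = ∑ p : Fin m × Fin m, T i p.1 * T j p.2 * X p.1 p.2 := by
      rw [hYe]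
      exact (Fintype.sum_prod_type
        (f := fun p : Fin m × Fin m => T i p.1 * T j p.2 * X p.1 p.2)).symm
    have hsplit : Y i j = T i i * T j j * X i j
        + ∑ p ∈ Finset.univ.erase (i, j), T i p.1 * T j p.2 * X p.1 p.2 := by
      rw [hYsum, ← Finset.add_sum_erase _ _ (Finset.mem_univ (i, j))]
    have hterm : ∀ p ∈ Finset.univ.erase (i, j),
        T i p.1 * T j p.2 * X p.1 p.2 ≤ r * X p.1 p.2 := by
      intro p hp
      have hpne : p ≠ (i, j) := (Finset.mem_erase.1 hp).1
      have hTT : T i p.1 * T j p.2 ≤ r := by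
        rcases eq_or_ne p.1 i with h1 | h1
        · have h2 : p.2 ≠ j := by
            intro h2; exact hpne (Prod.ext h1 h2)
          calc T i p.1 * T j p.2 ≤ 1 * r :=
                mul_le_mul (h1 ▸ hT1 i p.1) (hToff (Ne.symm h2)) (hT0 j p.2) zero_le_one
            _ = r := one_mul r
        · calc T i p.1 * T j p.2 ≤ r * 1 :=
                mul_le_mul (hToff (Ne.symm h1)) (hT1 j p.2) (hT0 j p.2) hr0
            _ = r := mul_one r
      exact mul_le_mul_of_nonneg_right hTT (hX0 p.1 p.2)
    have hRub : ∑ p ∈ Finset.univ.erase (i, j), T i p.1 * T j p.2 * X p.1 p.2 ≤ r * c := by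
      calc ∑ p ∈ Finset.univ.erase (i, j), T i p.1 * T j p.2 * X p.1 p.2
          ≤ ∑ p ∈ Finset.univ.erase (i, j), r * X p.1 p.2 := Finset.sum_le_sum hterm
        _ ≤ ∑ p : Fin m × Fin m, r * X p.1 p.2 := by
            refine Finset.sum_le_sum_of_subset_of_nonneg (Finset.erase_subset _ _)
              fun p _ _ => mul_nonneg hr0 (hX0 p.1 p.2)
        _ = r * ∑ p : Fin m × Fin m, X p.1 p.2 := (Finset.mul_sum _ _ _).symm
        _ ≤ r * c := by
            refine mul_le_mul_of_nonneg_left ?_ hr0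
            rw [Fintype.sum_prod_type]
            exact le_trans (le_of_eq hXsum) hS
    have hR0 : 0 ≤ ∑ p ∈ Finset.univ.erase (i, j), T i p.1 * T j p.2 * X p.1 p.2 :=
      Finset.sum_nonneg fun p _ =>
        mul_nonneg (mul_nonneg (hT0 i p.1) (hT0 j p.2)) (hX0 p.1 p.2)
    have hTTle : T i i * T j j ≤ 1 := by
      calc T i i * T j j ≤ 1 * 1 := mul_le_mul (hT1 i i) (hT1 j j) (hT0 j j) zero_le_one
        _ = 1 := one_mul 1
    have hTTge : 1 - 2 * r ≤ T i i * T j j := by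
      have h1 : (1 - r) * (1 - r) ≤ T i i * T j j :=
        mul_le_mul (hTdg i) (hTdg j) (by linarith) (by linarith [hTdg i])
      nlinarith
    have up : Y i j - X i j ≤ 2 * c * η / ε := by
      rw [hcr]
      nlinarith [hX0 i j, hRub, hTTle, hsplit, mul_nonneg hc hr0]
    have lo : X i j - Y i j ≤ 2 * c * η / ε := by
      rw [hcr]
      nlinarith [hX0 i j, hXle i j, hr0, hc, hR0, hTTge, hsplit]
    exact abs_sub_le_iff.2 ⟨lo, up⟩

lemma tShape0_mem_Icc {α : Type} [MeasurableSpace α] {c : ℝ} (hc : 0 ≤ c)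
    (ν : Measure α) (μ : Measure (α × α)) [IsFiniteMeasure μ]
    (hmass : μ Set.univ ≤ ENNReal.ofReal c) {m : ℕ} (a : Fin m → ℝ) :
    ∀ X ∈ tShape0 ν μ a, ∀ i j, X i j ∈ Set.Icc (0:ℝ) c := by
  rintro X ⟨f, hfm, hf0, hfs, hfi, hfX⟩ i j
  have hfle1 : ∀ k x, f k x ≤ 1 := by
    intro k x
    rw [← hfs x]
    exact Finset.single_le_sum (fun i _ => hf0 i x) (Finset.mem_univ k)
  have hFint : ∀ k l, Integrable (fun p : α × α => f k p.1 * f l p.2) μ := by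
    intro k l
    have hm : Measurable fun p : α × α => f k p.1 * f l p.2 :=
      ((hfm k).comp measurable_fst).mul ((hfm l).comp measurable_snd)
    refine (integrable_const (1:ℝ)).mono' hm.aestronglyMeasurable (ae_of_all _ fun p => ?_)
    rw [Real.norm_eq_abs, abs_of_nonneg (mul_nonneg (hf0 k p.1) (hf0 l p.2))]
    nlinarith [hf0 k p.1, hf0 l p.2, hfle1 k p.1, hfle1 l p.2]
  have hX0 : ∀ k l, 0 ≤ X k l := by
    intro k l
    rw [hfX]
    exact integral_nonneg fun p => mul_nonneg (hf0 k p.1) (hf0 l p.2)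
  have hXsum : ∑ k, ∑ l, X k l = (μ Set.univ).toReal := by
    calc ∑ k, ∑ l, X k l = ∑ k, ∑ l, ∫ p, f k p.1 * f l p.2 ∂μ := by
          exact Finset.sum_congr rfl fun k _ => Finset.sum_congr rfl fun l _ => hfX k l
      _ = ∑ k, ∫ p, ∑ l, f k p.1 * f l p.2 ∂μ :=
          Finset.sum_congr rfl fun k _ => (integral_finset_sum _ fun l _ => hFint k l).symm
      _ = ∫ p, ∑ k, ∑ l, f k p.1 * f l p.2 ∂μ :=
          (integral_finset_sum _ fun k _ => integrable_finset_sum _ fun l _ => hFint k l).symm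
      _ = ∫ _, (1:ℝ) ∂μ := by
          refine integral_congr_ae (ae_of_all _ fun p => ?_)
          calc ∑ k, ∑ l, f k p.1 * f l p.2
              = ∑ k, f k p.1 * ∑ l, f l p.2 :=
                Finset.sum_congr rfl fun k _ => (Finset.mul_sum _ _ _).symm
            _ = 1 := by rw [hfs p.2]; simp only [mul_one]; exact hfs p.1
      _ = (μ Set.univ).toReal := by simp; rfl
  have hS : (μ Set.univ).toReal ≤ c := ENNReal.toReal_le_of_le_ofReal hc hmass
  refine ⟨hX0 i j, ?_⟩
  refine le_trans ?_ (hXsum ▸ hS)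
  calc X i j ≤ ∑ l', X i l' :=
        Finset.single_le_sum (fun l' _ => hX0 i l') (Finset.mem_univ j)
    _ ≤ ∑ k', ∑ l', X k' l' :=
        Finset.single_le_sum (fun k' _ => Finset.sum_nonneg fun l' _ => hX0 k' l')
          (Finset.mem_univ i)

lemma matrix_eval_continuous {m : ℕ} (i j : Fin m) :
    Continuous fun M : Matrix (Fin m) (Fin m) ℝ => M i j :=
  (continuous_apply j).comp (continuous_apply i)

lemma box_compact (m : ℕ) (c : ℝ) :
    IsCompact {M : Matrix (Fin m) (Fin m) ℝ | ∀ i j, M i j ∈ Set.Icc (0:ℝ) c} := by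
  have h : {M : Matrix (Fin m) (Fin m) ℝ | ∀ i j, M i j ∈ Set.Icc (0:ℝ) c}
      = Set.univ.pi (fun _ : Fin m => Set.univ.pi fun _ : Fin m => Set.Icc (0:ℝ) c) := by
    ext M
    constructor
    · intro h i _ j _
      exact h i j
    · intro h i j
      exact h i (Set.mem_univ i) j (Set.mem_univ j)
  rw [h]
  exact isCompact_univ_pi fun _ => isCompact_univ_pi fun _ => isCompact_Icc

lemma glue {m : ℕ} (c B : ℝ) (hB : 0 ≤ B)
    (A0 B0 : Set (Matrix (Fin m) (Fin m) ℝ))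
    (hB0 : ∀ Y ∈ B0, ∀ i j, Y i j ∈ Set.Icc (0:ℝ) c)
    (hAB : ∀ X ∈ A0, ∃ Y ∈ B0, ∀ i j, |X i j - Y i j| ≤ B) :
    ∀ X ∈ closure A0, ∃ Y ∈ closure B0, ∀ i j, |X i j - Y i j| ≤ B := by
  intro X hX
  set Q : Set (Matrix (Fin m) (Fin m) ℝ) := {M | ∀ i j, M i j ∈ Set.Icc (0:ℝ) c} with hQ
  have hQc : IsCompact Q := box_compact m c
  have hKQ : closure B0 ⊆ Q := closure_minimal (fun Y hY => hB0 Y hY) hQc.isClosed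
  have hK : IsCompact (closure B0) := hQc.of_isClosed_subset isClosed_closure hKQ
  set V : ℕ → Set (Matrix (Fin m) (Fin m) ℝ) :=
    fun n => closure B0 ∩ ⋂ i, ⋂ j, {Y | |X i j - Y i j| ≤ B + 1 / (n + 1)} with hV
  have hVclosed : ∀ n, IsClosed (V n) := by
    intro n
    refine isClosed_closure.inter (isClosed_iInter fun i => isClosed_iInter fun j => ?_)
    exact isClosed_le ((continuous_const.sub (matrix_eval_continuous i j)).abs) continuous_const
  have hVsub : ∀ n, V (n + 1) ⊆ V n := by
    intro n Y hY
    refine ⟨hY.1, Set.mem_iInter.2 fun i => Set.mem_iInter.2 fun j => ?_⟩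
    have h1 := Set.mem_iInter.1 (Set.mem_iInter.1 hY.2 i) j
    have h2 : (1 : ℝ) / (n + 1 + 1) ≤ 1 / (n + 1) := by
      have hp : (0:ℝ) < n + 1 := by positivity
      exact one_div_le_one_div_of_le hp (by linarith)
    simp only [Set.mem_setOf_eq] at h1 ⊢
    push_cast at h1 ⊢
    linarith
  have hVne : ∀ n, (V n).Nonempty := by
    intro n
    have hpos : (0:ℝ) < 1 / (n + 1) := by positivity
    set O : Set (Matrix (Fin m) (Fin m) ℝ) :=
      ⋂ i, ⋂ j, {Z | |X i j - Z i j| < 1 / (n + 1)} with hO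
    have hOopen : IsOpen O :=
      isOpen_iInter_of_finite fun i => isOpen_iInter_of_finite fun j =>
        isOpen_lt ((continuous_const.sub (matrix_eval_continuous i j)).abs) continuous_const
    have hXO : X ∈ O := Set.mem_iInter.2 fun i => Set.mem_iInter.2 fun j => by
      simp only [Set.mem_setOf_eq, sub_self, abs_zero]
      exact hpos
    obtain ⟨X', hX'O, hX'A⟩ := mem_closure_iff.1 hX O hOopen hXO
    obtain ⟨Y, hYB, hYd⟩ := hAB X' hX'A
    refine ⟨Y, subset_closure hYB, Set.mem_iInter.2 fun i => Set.mem_iInter.2 fun j => ?_⟩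
    have h1 := Set.mem_iInter.1 (Set.mem_iInter.1 hX'O i) j
    simp only [Set.mem_setOf_eq] at h1 ⊢
    calc |X i j - Y i j| ≤ |X i j - X' i j| + |X' i j - Y i j| := abs_sub_le _ _ _
      _ ≤ B + 1 / (n + 1) := by linarith [hYd i j]
  obtain ⟨Y, hY⟩ := IsCompact.nonempty_iInter_of_sequence_nonempty_isCompact_isClosed V
    hVsub hVne (hK.of_isClosed_subset (hVclosed 0) (Set.inter_subset_left)) hVclosed
  have hYK : Y ∈ closure B0 := (Set.mem_iInter.1 hY 0).1
  refine ⟨Y, hYK, fun i j => ?_⟩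
  by_contra hcon
  push_neg at hcon
  obtain ⟨n, hn⟩ := exists_nat_one_div_lt (sub_pos.2 hcon)
  have h1 := Set.mem_iInter.1 (Set.mem_iInter.1 (Set.mem_iInter.1 hY n).2 i) j
  simp only [Set.mem_setOf_eq] at h1
  push_cast at h1 hn
  linarith

/-- Uniform Lipschitz continuity of `α ↦ C̃(μ,α)` over all symmetric measures
of total mass at most `c`: if `α, β ∈ (ε,1]^m` sum to `1` and `‖α − β‖_∞ ≤ η < ε/m`, then the
ℓ∞-Hausdorff distance between `C̃(μ,α)` and `C̃(μ,β)` is at most `2c(m−1)η/ε`. -/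
theorem stmt_19 (c : ℝ) (hc : 0 < c) (m : ℕ) (hm : 0 < m)
    (ε : ℝ) (hε : ε ∈ Set.Ioc (0 : ℝ) (1 / m))
    (ν : Measure Cantor) (hν : IsCoinMeasure ν)
    (η : ℝ) (hη : η ∈ Set.Ioo (0 : ℝ) (ε / m))
    (a b : Fin m → ℝ)
    (ha : ∀ i, a i ∈ Set.Ioc ε 1) (ha1 : ∑ i, a i = 1)
    (hb : ∀ i, b i ∈ Set.Ioc ε 1) (hb1 : ∑ i, b i = 1)
    (hab : ∀ i, |a i - b i| ≤ η)
    (μ : Measure (Cantor × Cantor)) (hsym : μ.map Prod.swap = μ)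
    (hmass : μ Set.univ ≤ ENNReal.ofReal c) :
    hdistInfLE (tShape ν μ a) (tShape ν μ b) (2 * c * ((m : ℝ) - 1) * η / ε) := by

  haveI := hν.1
  haveI : IsFiniteMeasure μ := ⟨lt_of_le_of_lt hmass ENNReal.ofReal_lt_top⟩
  have hε0 : (0:ℝ) < ε := hε.1
  have hη0 : (0:ℝ) < η := hη.1
  rcases Nat.lt_or_ge m 2 with h2 | h2
  · -- m = 1
    have hm1 : m = 1 := by omega
    subst hm1
    have hab' : a = b := by
      funext i
      have h0 : i = 0 := Fin.eq_zero i
      rw [h0, show a 0 = 1 from by simpa using ha1, show b 0 = 1 from by simpa using hb1]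
    have hR : (0:ℝ) ≤ 2 * c * ((1 : ℝ) - 1) * η / ε := by norm_num
    constructor
    · intro X hX
      refine ⟨X, hab' ▸ hX, fun i j => ?_⟩
      simpa using hR
    · intro Y hY
      refine ⟨Y, hab' ▸ hY, fun i j => ?_⟩
      simpa using hR
  · -- 2 ≤ m
    have hm1 : (1:ℝ) ≤ (m:ℝ) - 1 := by
      have : (2:ℝ) ≤ (m:ℝ) := by exact_mod_cast h2
      linarith
    have hmR : (1:ℝ) ≤ (m:ℝ) := by linarith
    have hηε : η < ε := lt_of_lt_of_le hη.2 (div_le_self hε0.le hmR)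
    have haε : ∀ i, ε < a i := fun i => (ha i).1
    have hbε : ∀ i, ε < b i := fun i => (hb i).1
    have hba : ∀ i, |b i - a i| ≤ η := fun i => (abs_sub_comm (b i) (a i)) ▸ hab i
    have hB0 : (0:ℝ) ≤ 2 * c * η / ε := by positivity
    have h1 := glue c (2 * c * η / ε) hB0 (tShape0 ν μ a) (tShape0 ν μ b)
      (tShape0_mem_Icc hc.le ν μ hmass b)
      (key c hc.le hε0 hη0.le hηε ν μ hmass a b haε ha1 hb1 hab)
    have h2' := glue c (2 * c * η / ε) hB0 (tShape0 ν μ b) (tShape0 ν μ a)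
      (tShape0_mem_Icc hc.le ν μ hmass a)
      (key c hc.le hε0 hη0.le hηε ν μ hmass b a hbε hb1 ha1 hba)
    have hBB : 2 * c * η / ε ≤ 2 * c * ((m : ℝ) - 1) * η / ε := by
      have hnum : 2 * c * η ≤ 2 * c * ((m:ℝ) - 1) * η := by nlinarith [mul_nonneg (mul_nonneg (by linarith : (0:ℝ) ≤ 2*c) hη0.le) (by linarith : (0:ℝ) ≤ (m:ℝ)-2)]
      exact (div_le_div_iff_of_pos_right hε0).2 hnum
    constructor
    · intro X hX
      obtain ⟨Y, hY, hd⟩ := h1 X hX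
      exact ⟨Y, hY, fun i j => le_trans (hd i j) hBB⟩
    · intro Y hY
      obtain ⟨X, hX, hd⟩ := h2' Y hY
      exact ⟨X, hX, fun i j => le_trans ((abs_sub_comm (Y i j) (X i j)) ▸ hd i j) hBB⟩
end
end
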